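/- Let n, r ∈ ℕ and let B be a chain disjoint from the r-element chain r = {0 < 1 < ⋯ < r−1}. Then for every type τ ⊆ r with |τ| ≤ n, every k ≥ 2 and every coloring χ : Emb_τ(n, B + r) → {0, …, k−1} there exists a suborder U ⊆ B order-isomorphic to B such that χ takes at most T(n − |τ|, B) values on Emb_τ(n, U + r). -/

import Mathlib

/-- `t` is admissible for `(n, α)`: for every coloring of the order embeddings of the
`n`-element chain into `α` with `k ≥ 2` colors, there is a suborder of `α` order-isomorphic
to `α` (given as the range of a self-embedding `e`) on whose copies of `n` the coloring takes
at most `t` values. -/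
def BrdAdmissible (α : Type*) [LinearOrder α] (n t : ℕ) : Prop :=
  ∀ k : ℕ, 2 ≤ k → ∀ χ : (Fin n ↪o α) → Fin k,
    ∃ e : α ↪o α,
      ({c : Fin k | ∃ f : Fin n ↪o α, χ (f.trans e) = c}).ncard ≤ t

/-- The big Ramsey degree `T(n, α) ∈ ℕ ∪ {∞}`: the least admissible `t`, or `∞` if none. -/
noncomputable def brd (α : Type*) [LinearOrder α] (n : ℕ) : ℕ∞ :=
  sInf {t : ℕ∞ | ∃ t₀ : ℕ, t = (t₀ : ℕ∞) ∧ BrdAdmissible α n t₀}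

/-- The type of an embedding `f : n ↪o B + r`: the set of elements of the final
`r`-element chain hit by `f`. -/
def embTypeSet {β : Type*} [LinearOrder β] {n r : ℕ} (f : Fin n ↪o (β ⊕ₗ Fin r)) :
    Set (Fin r) :=
  {i : Fin r | ∃ j : Fin n, f j = toLex (Sum.inr i)}

/-- Extend a self-embedding of `β` to a self-embedding of `β ⊕ₗ Fin r` which is the
identity on the final `r`-element chain; its range is `U + r` for `U` the range of `e`. -/
def extEmb {β : Type*} [LinearOrder β] {r : ℕ} (e : β ↪o β) :
    (β ⊕ₗ Fin r) ↪o (β ⊕ₗ Fin r) :=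
  OrderEmbedding.ofStrictMono
    (fun x => toLex (Sum.map e id (ofLex x)))
    (by
      intro a b h
      rw [Sum.Lex.lt_def] at h
      cases h with
      | inl h => exact Sum.Lex.inl_lt_inl_iff.2 (e.strictMono h)
      | inr h => exact Sum.Lex.inr_lt_inr_iff.2 h
      | sep a b => exact Sum.Lex.inl_lt_inr _ _)

section Aux
variable {β : Type*} [LinearOrder β] {r : ℕ}

def Ffun (τ : Finset (Fin r)) {m n : ℕ} (hm : m + τ.card = n) (g : Fin m ↪o β) :
    Fin n ↪o (β ⊕ₗ Fin r) :=
  OrderEmbedding.ofStrictMono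
    (fun j => if hj : (j : ℕ) < m then toLex (Sum.inl (g ⟨(j : ℕ), hj⟩))
      else toLex (Sum.inr (τ.orderEmbOfFin rfl
        ⟨(j : ℕ) - m, by have := j.isLt; omega⟩)))
    (by
      intro a b hab
      have hab' : (a : ℕ) < (b : ℕ) := hab
      by_cases ha : (a : ℕ) < m <;> by_cases hb : (b : ℕ) < m
      · simp only [dif_pos ha, dif_pos hb]
        exact Sum.Lex.inl_lt_inl_iff.2 (g.strictMono (Fin.mk_lt_mk.2 hab'))
      · simp only [dif_pos ha, dif_neg hb]
        exact Sum.Lex.inl_lt_inr _ _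
      · omega
      · simp only [dif_neg ha, dif_neg hb]
        exact Sum.Lex.inr_lt_inr_iff.2
          ((τ.orderEmbOfFin rfl).strictMono (Fin.mk_lt_mk.2 (by omega))))

lemma Ffun_trans (τ : Finset (Fin r)) {m n : ℕ} (hm : m + τ.card = n)
    (g : Fin m ↪o β) (e : β ↪o β) :
    (Ffun τ hm g).trans (extEmb e) = Ffun τ hm (g.trans e) := by
  ext j
  by_cases hj : (j : ℕ) < m <;>
    simp [Ffun, extEmb, OrderEmbedding.coe_ofStrictMono, hj, RelEmbedding.trans_apply, OrderEmbedding.ofStrictMono]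


lemma decompose (τ : Finset (Fin r)) {m n : ℕ} (hm : m + τ.card = n)
    (f : Fin n ↪o (β ⊕ₗ Fin r)) (hf : embTypeSet f = ↑τ) :
    ∃ g : Fin m ↪o β, Ffun τ hm g = f := by
  classical
  have hwit : ∀ i : Fin r, i ∈ τ → ∃ j : Fin n, f j = toLex (Sum.inr i) := by
    intro i hi
    have : i ∈ embTypeSet f := by rw [hf]; exact_mod_cast hi
    exact this
  have hmem : ∀ (j : Fin n) (i : Fin r), f j = toLex (Sum.inr i) → i ∈ τ := by
    intro j i hji
    have : i ∈ embTypeSet f := ⟨j, hji⟩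
    rw [hf] at this
    exact_mod_cast this
  -- below m : left part
  have keyl : ∀ j : Fin n, (j : ℕ) < m → ∃ x : β, f j = toLex (Sum.inl x) := by
    intro j hj
    rcases hx : ofLex (f j) with x | i0
    · exact ⟨x, by rw [← hx, toLex_ofLex]⟩
    · exfalso
      have hfj : f j = toLex (Sum.inr i0) := by rw [← hx, toLex_ofLex]
      have hup : ∀ j' : Fin n, j ≤ j' → ∃ i, f j' = toLex (Sum.inr i) := by
        intro j' hjj'
        rcases hx' : ofLex (f j') with x | i
        · exfalso
          have h1 : f j ≤ f j' := f.monotone hjj'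
          have hfj' : f j' = toLex (Sum.inl x) := by rw [← hx', toLex_ofLex]
          rw [hfj, hfj'] at h1
          exact absurd h1 (not_le.2 (Sum.Lex.inl_lt_inr _ _))
        · exact ⟨i, by rw [← hx', toLex_ofLex]⟩
      set v : Fin n → Fin r := fun j' => Sum.elim (fun _ => i0) id (ofLex (f j')) with hvdef
      have hv : ∀ j' : Fin n, j ≤ j' → f j' = toLex (Sum.inr (v j')) := by
        intro j' hjj'
        obtain ⟨i, hi⟩ := hup j' hjj'
        have h2 : ofLex (f j') = Sum.inr i := by rw [hi]; rfl
        rw [hvdef]; simp only [h2, Sum.elim_inr, id]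
        exact hi
      have h1 : (Finset.univ.filter (fun j' : Fin n => j ≤ j')).card ≤ τ.card := by
        apply Finset.card_le_card_of_injOn v
        · intro j' hj'
          simp only [Finset.mem_coe, Finset.mem_filter, Finset.mem_univ, true_and] at hj'
          exact hmem j' _ (hv j' hj')
        · intro a ha b hb hab
          simp only [Finset.coe_filter, Set.mem_setOf_eq, Finset.mem_univ, true_and] at ha hb
          exact f.injective (by rw [hv a ha, hv b hb, hab])
      have h2 : n - (j : ℕ) ≤ (Finset.univ.filter (fun j' : Fin n => j ≤ j')).card := by
        have h3 := Finset.card_le_card_of_injOn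
          (s := (Finset.univ : Finset (Fin (n - (j : ℕ)))))
          (t := Finset.univ.filter (fun j' : Fin n => j ≤ j'))
          (fun q => (⟨(j : ℕ) + (q : ℕ), by have := q.isLt; omega⟩ : Fin n))
          (by
            intro q _
            simp only [Finset.mem_coe, Finset.mem_filter, Finset.mem_univ, true_and, Fin.le_def]
            omega)
          (by
            intro a _ b _ hab
            have : (j : ℕ) + (a : ℕ) = (j : ℕ) + (b : ℕ) := by simpa using congrArg (fun z : Fin n => (z : ℕ)) hab
            exact Fin.ext (by omega))
        simpa using h3
      have := j.isLt
      omega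
  -- above m : right part
  have key : ∀ j : Fin n, m ≤ (j : ℕ) → ∃ i : Fin r, f j = toLex (Sum.inr i) := by
    intro j hj
    rcases hx : ofLex (f j) with x | i
    · exfalso
      have hfj : f j = toLex (Sum.inl x) := by rw [← hx, toLex_ofLex]
      have hdown : ∀ j' : Fin n, j' ≤ j → ∃ x' : β, f j' = toLex (Sum.inl x') := by
        intro j' hjj'
        rcases hx' : ofLex (f j') with x' | i'
        · exact ⟨x', by rw [← hx', toLex_ofLex]⟩
        · exfalso
          have h1 : f j' ≤ f j := f.monotone hjj'
          have hfj' : f j' = toLex (Sum.inr i') := by rw [← hx', toLex_ofLex]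
          rw [hfj, hfj'] at h1
          exact absurd h1 (not_le.2 (Sum.Lex.inl_lt_inr _ _))
      set w : Fin r → Fin n := fun i => if h : i ∈ τ then (hwit i h).choose else j with hwdef
      have hw : ∀ i ∈ τ, f (w i) = toLex (Sum.inr i) := by
        intro i hi
        rw [hwdef]; simp only [dif_pos hi]
        exact (hwit i hi).choose_spec
      have hwgt : ∀ i ∈ τ, (j : ℕ) < ((w i : Fin n) : ℕ) := by
        intro i hi
        by_contra hle
        obtain ⟨x', hx'⟩ := hdown (w i) (by exact Fin.le_def.2 (by omega))
        rw [hw i hi] at hx'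
        exact absurd (toLex.injective hx') (by simp)
      have h1 : τ.card ≤ (Finset.univ.filter (fun j' : Fin n => (j : ℕ) < (j' : ℕ))).card := by
        apply Finset.card_le_card_of_injOn w
        · intro i hi
          simp only [Finset.mem_coe, Finset.mem_filter, Finset.mem_univ, true_and]
          exact hwgt i hi
        · intro a ha b hb hab
          simp only [Finset.mem_coe] at ha hb
          have : f (w a) = f (w b) := by rw [hab]
          rw [hw a ha, hw b hb] at this
          exact Sum.inr_injective (toLex.injective this)
      have h2 : (Finset.univ.filter (fun j' : Fin n => (j : ℕ) < (j' : ℕ))).card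
          + (Finset.univ.filter (fun j' : Fin n => ¬ (j : ℕ) < (j' : ℕ))).card = n := by
        rw [Finset.card_filter_add_card_filter_not]
        simp
      have h3 : (j : ℕ) + 1 ≤ (Finset.univ.filter (fun j' : Fin n => ¬ (j : ℕ) < (j' : ℕ))).card := by
        have h4 := Finset.card_le_card_of_injOn
          (s := (Finset.univ : Finset (Fin ((j : ℕ) + 1))))
          (t := Finset.univ.filter (fun j' : Fin n => ¬ (j : ℕ) < (j' : ℕ)))
          (fun q => (⟨(q : ℕ), by have := q.isLt; have := j.isLt; omega⟩ : Fin n))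
          (by
            intro q _
            simp only [Finset.mem_coe, Finset.mem_filter, Finset.mem_univ, true_and, not_lt]
            have := q.isLt; omega)
          (by
            intro a _ b _ hab
            exact Fin.ext (by simpa using congrArg (fun z : Fin n => (z : ℕ)) hab))
        simpa using h4
      have := j.isLt
      omega
    · exact ⟨i, by rw [← hx, toLex_ofLex]⟩
  -- build g
  have hmn : m ≤ n := by omega
  set g0 : Fin m → β := fun p =>
    (keyl ⟨(p : ℕ), by have := p.isLt; omega⟩ p.isLt).choose with hg0def
  have hg0 : ∀ p : Fin m, f ⟨(p : ℕ), by have := p.isLt; omega⟩ = toLex (Sum.inl (g0 p)) :=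
    fun p => (keyl ⟨(p : ℕ), by have := p.isLt; omega⟩ p.isLt).choose_spec
  have hg0mono : StrictMono g0 := by
    intro p q hpq
    have h1 : f ⟨(p : ℕ), by have := p.isLt; omega⟩ < f ⟨(q : ℕ), by have := q.isLt; omega⟩ :=
      f.strictMono (Fin.mk_lt_mk.2 hpq)
    rw [hg0 p, hg0 q] at h1
    exact Sum.Lex.inl_lt_inl_iff.1 h1
  refine ⟨OrderEmbedding.ofStrictMono g0 hg0mono, ?_⟩
  -- the top part
  set θ : Fin τ.card → Fin r := fun p =>
    (key ⟨m + (p : ℕ), by have := p.isLt; omega⟩ (Nat.le_add_right _ _)).choose with hθdef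
  have hθ : ∀ p : Fin τ.card,
      f ⟨m + (p : ℕ), by have := p.isLt; omega⟩ = toLex (Sum.inr (θ p)) :=
    fun p => (key ⟨m + (p : ℕ), by have := p.isLt; omega⟩ (Nat.le_add_right _ _)).choose_spec
  have hθτ : ∀ p, θ p ∈ τ := fun p => hmem _ _ (hθ p)
  have hθmono : StrictMono θ := by
    intro p q hpq
    have h1 : f ⟨m + (p : ℕ), by have := p.isLt; omega⟩
        < f ⟨m + (q : ℕ), by have := q.isLt; omega⟩ :=
      f.strictMono (Fin.mk_lt_mk.2 (by omega))
    rw [hθ p, hθ q] at h1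
    exact Sum.Lex.inr_lt_inr_iff.1 h1
  have hθeq : θ = ⇑(τ.orderEmbOfFin rfl) :=
    Finset.orderEmbOfFin_unique rfl hθτ hθmono
  apply RelEmbedding.ext
  intro j
  by_cases hj : (j : ℕ) < m
  · have := hg0 ⟨(j : ℕ), hj⟩
    simp only [Ffun, OrderEmbedding.coe_ofStrictMono, dif_pos hj]
    rw [show (⟨((⟨(j : ℕ), hj⟩ : Fin m) : ℕ), _⟩ : Fin n) = j from Fin.ext rfl] at this
    rw [this]
  · have hp : (j : ℕ) - m < τ.card := by have := j.isLt; omega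
    have := hθ ⟨(j : ℕ) - m, hp⟩
    rw [show (⟨m + (((⟨(j : ℕ) - m, hp⟩ : Fin τ.card)) : ℕ), _⟩ : Fin n) = j from
      Fin.ext (by simp; omega)] at this
    simp only [Ffun, OrderEmbedding.coe_ofStrictMono, dif_neg hj]
    rw [this, ← hθeq]
end Aux

/-- For every type `τ ⊆ r` with `|τ| ≤ n`, every `k ≥ 2` and every coloring of the
embeddings of `n` into `B + r` of type `τ`, there is a suborder `U ⊆ B` order-isomorphic
to `B` (the range of a self-embedding `e` of `B`) such that the coloring takes at most
`T(n - |τ|, B)` values on `Emb_τ(n, U + r)`. -/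
theorem statement4 {β : Type*} [LinearOrder β] {n r : ℕ} (τ : Finset (Fin r))
    (hτ : τ.card ≤ n) (k : ℕ) (hk : 2 ≤ k)
    (χ : (Fin n ↪o (β ⊕ₗ Fin r)) → Fin k) :
    ∃ e : β ↪o β,
      (({c : Fin k | ∃ f : Fin n ↪o (β ⊕ₗ Fin r),
          embTypeSet f = ↑τ ∧ χ (f.trans (extEmb e)) = c}).ncard : ℕ∞)
        ≤ brd β (n - τ.card) := by
  classical
  set m := n - τ.card with hmdef
  have hm : m + τ.card = n := Nat.sub_add_cancel hτ
  by_cases hS : ∃ t : ℕ, BrdAdmissible β m t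
  · have hadm : BrdAdmissible β m (Nat.find hS) := Nat.find_spec hS
    obtain ⟨e, he⟩ := hadm k hk (fun g => χ (Ffun τ hm g))
    refine ⟨e, ?_⟩
    have hsub : {c : Fin k | ∃ f : Fin n ↪o (β ⊕ₗ Fin r),
        embTypeSet f = ↑τ ∧ χ (f.trans (extEmb e)) = c}
        ⊆ {c : Fin k | ∃ g : Fin m ↪o β,
            (fun g' => χ (Ffun τ hm g')) (g.trans e) = c} := by
      rintro c ⟨f, hft, rfl⟩
      obtain ⟨g, hg⟩ := decompose τ hm f hft
      exact ⟨g, by simp only [← Ffun_trans, hg]⟩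
    have h1 : ({c : Fin k | ∃ f : Fin n ↪o (β ⊕ₗ Fin r),
        embTypeSet f = ↑τ ∧ χ (f.trans (extEmb e)) = c}).ncard ≤ Nat.find hS :=
      le_trans (Set.ncard_le_ncard hsub (Set.toFinite _)) he
    have h2 : ((Nat.find hS : ℕ) : ℕ∞) ≤ brd β m := by
      apply le_sInf
      rintro t ⟨t₁, rfl, ht₁⟩
      exact_mod_cast Nat.find_min' hS ht₁
    exact le_trans (by exact_mod_cast h1) h2
  · push_neg at hS
    have hempty : {t : ℕ∞ | ∃ t₀ : ℕ, t = (t₀ : ℕ∞) ∧ BrdAdmissible β m t₀} = ∅ :=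
      Set.eq_empty_iff_forall_notMem.2 (fun t ⟨t₀, _, h⟩ => hS t₀ h)
    have htop : brd β m = ⊤ := by rw [brd, hempty, sInf_empty]
    exact ⟨(OrderIso.refl β).toOrderEmbedding, by rw [htop]; exact le_top⟩
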